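/- The flat-ground power dissipation function D is a seminorm on ℝ⁵, i.e., regarded as a function of the joint variable (ẋ, ẏ, θ̇, S_r, S_l) ∈ ℝ⁵ it satisfies: D(v) ≥ 0 for all v; D(λv) = |λ| · D(v) for all λ ∈ ℝ and v ∈ ℝ⁵; and D(v + w) ≤ D(v) + D(w) for all v, w ∈ ℝ⁵. -/

import Mathlib

open MeasureTheory

/-- Flat-ground power dissipation function of a tracked vehicle. -/
noncomputable def flatD (L T W : ℝ) (xd yd td Sr Sl : ℝ) : ℝ :=
  (∫ ry in (-T)..T, ∫ rx in (-L)..L,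
    Real.sqrt ((xd + (W - ry) * td - Sr) ^ 2 + (yd + rx * td) ^ 2)) +
  (∫ ly in (-T)..T, ∫ lx in (-L)..L,
    Real.sqrt ((xd - (W + ly) * td - Sl) ^ 2 + (yd + lx * td) ^ 2))

/-- The flat-ground dissipation function viewed on the joint variable space ℝ⁵. -/
noncomputable def flatD5 (L T W : ℝ) (v : ℝ × ℝ × ℝ × ℝ × ℝ) : ℝ :=
  flatD L T W v.1 v.2.1 v.2.2.1 v.2.2.2.1 v.2.2.2.2

/-- Auxiliary double integral. -/
noncomputable def trackG (L T : ℝ) (α : ℝ → ℝ) (x y t S : ℝ) : ℝ :=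
  ∫ ry in (-T)..T, ∫ rx in (-L)..L,
    Real.sqrt ((x + α ry * t - S) ^ 2 + (y + rx * t) ^ 2)

lemma sqrt_add_sq_le (a1 b1 a2 b2 : ℝ) :
    Real.sqrt ((a1 + a2) ^ 2 + (b1 + b2) ^ 2) ≤
      Real.sqrt (a1 ^ 2 + b1 ^ 2) + Real.sqrt (a2 ^ 2 + b2 ^ 2) := by
  have h := norm_add_le (⟨a1, b1⟩ : ℂ) ⟨a2, b2⟩
  simpa [Complex.norm_def, Complex.normSq_apply, Complex.add_re, Complex.add_im, sq] using h

lemma sqrt_mul_sq (c a b : ℝ) :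
    Real.sqrt ((c * a) ^ 2 + (c * b) ^ 2) = |c| * Real.sqrt (a ^ 2 + b ^ 2) := by
  rw [mul_pow, mul_pow, ← mul_add, Real.sqrt_mul (sq_nonneg c), Real.sqrt_sq_eq_abs]

lemma trackG_nonneg (L T : ℝ) (α : ℝ → ℝ) (x y t S : ℝ) (hL : 0 ≤ L) (hT : 0 ≤ T) :
    0 ≤ trackG L T α x y t S := by
  refine intervalIntegral.integral_nonneg (by linarith) fun ry _ => ?_
  exact intervalIntegral.integral_nonneg (by linarith) fun rx _ => Real.sqrt_nonneg _

lemma trackG_smul (L T : ℝ) (α : ℝ → ℝ) (c x y t S : ℝ) :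
    trackG L T α (c * x) (c * y) (c * t) (c * S) = |c| * trackG L T α x y t S := by
  unfold trackG
  have h : ∀ ry rx : ℝ,
      Real.sqrt ((c * x + α ry * (c * t) - c * S) ^ 2 + (c * y + rx * (c * t)) ^ 2)
        = |c| * Real.sqrt ((x + α ry * t - S) ^ 2 + (y + rx * t) ^ 2) := by
    intro ry rx
    have e1 : c * x + α ry * (c * t) - c * S = c * (x + α ry * t - S) := by ring
    have e2 : c * y + rx * (c * t) = c * (y + rx * t) := by ring
    rw [e1, e2, sqrt_mul_sq]
  simp_rw [h, intervalIntegral.integral_const_mul]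

lemma cont_inner (L : ℝ) (α : ℝ → ℝ) (hα : Continuous α) (x y t S : ℝ) :
    Continuous fun ry => ∫ rx in (-L)..L,
      Real.sqrt ((x + α ry * t - S) ^ 2 + (y + rx * t) ^ 2) := by
  apply intervalIntegral.continuous_parametric_intervalIntegral_of_continuous'
  apply Real.continuous_sqrt.comp
  fun_prop

lemma trackG_add_le (L T : ℝ) (hL : 0 ≤ L) (hT : 0 ≤ T) (α : ℝ → ℝ) (hα : Continuous α)
    (x1 y1 t1 S1 x2 y2 t2 S2 : ℝ) :
    trackG L T α (x1 + x2) (y1 + y2) (t1 + t2) (S1 + S2) ≤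
      trackG L T α x1 y1 t1 S1 + trackG L T α x2 y2 t2 S2 := by
  have hL' : (-L : ℝ) ≤ L := by linarith
  have hT' : (-T : ℝ) ≤ T := by linarith
  unfold trackG
  set f1 : ℝ → ℝ → ℝ := fun ry rx =>
    Real.sqrt ((x1 + α ry * t1 - S1) ^ 2 + (y1 + rx * t1) ^ 2) with hf1
  set f2 : ℝ → ℝ → ℝ := fun ry rx =>
    Real.sqrt ((x2 + α ry * t2 - S2) ^ 2 + (y2 + rx * t2) ^ 2) with hf2
  have c1 : ∀ ry, Continuous fun rx => f1 ry rx := by intro ry; fun_prop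
  have c2 : ∀ ry, Continuous fun rx => f2 ry rx := by intro ry; fun_prop
  have csum : ∀ ry, Continuous fun rx =>
      Real.sqrt (((x1 + x2) + α ry * (t1 + t2) - (S1 + S2)) ^ 2
        + ((y1 + y2) + rx * (t1 + t2)) ^ 2) := by intro ry; fun_prop
  have key : ∀ ry rx : ℝ,
      Real.sqrt (((x1 + x2) + α ry * (t1 + t2) - (S1 + S2)) ^ 2
        + ((y1 + y2) + rx * (t1 + t2)) ^ 2) ≤ f1 ry rx + f2 ry rx := by
    intro ry rx
    have e1 : (x1 + x2) + α ry * (t1 + t2) - (S1 + S2)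
        = (x1 + α ry * t1 - S1) + (x2 + α ry * t2 - S2) := by ring
    have e2 : (y1 + y2) + rx * (t1 + t2) = (y1 + rx * t1) + (y2 + rx * t2) := by ring
    rw [e1, e2]
    exact sqrt_add_sq_le _ _ _ _
  have inner_le : ∀ ry : ℝ,
      (∫ rx in (-L)..L, Real.sqrt (((x1 + x2) + α ry * (t1 + t2) - (S1 + S2)) ^ 2
        + ((y1 + y2) + rx * (t1 + t2)) ^ 2))
      ≤ (∫ rx in (-L)..L, f1 ry rx) + (∫ rx in (-L)..L, f2 ry rx) := by
    intro ry
    calc (∫ rx in (-L)..L, Real.sqrt (((x1 + x2) + α ry * (t1 + t2) - (S1 + S2)) ^ 2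
        + ((y1 + y2) + rx * (t1 + t2)) ^ 2))
        ≤ ∫ rx in (-L)..L, (f1 ry rx + f2 ry rx) := by
          apply intervalIntegral.integral_mono hL'
            ((csum ry).intervalIntegrable _ _)
            (((c1 ry).intervalIntegrable _ _).add ((c2 ry).intervalIntegrable _ _))
          intro rx
          exact key ry rx
      _ = (∫ rx in (-L)..L, f1 ry rx) + (∫ rx in (-L)..L, f2 ry rx) :=
          intervalIntegral.integral_add ((c1 ry).intervalIntegrable _ _)
            ((c2 ry).intervalIntegrable _ _)
  have C1 : Continuous fun ry => ∫ rx in (-L)..L, f1 ry rx := cont_inner L α hα x1 y1 t1 S1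
  have C2 : Continuous fun ry => ∫ rx in (-L)..L, f2 ry rx := cont_inner L α hα x2 y2 t2 S2
  have Csum : Continuous fun ry => ∫ rx in (-L)..L,
      Real.sqrt (((x1 + x2) + α ry * (t1 + t2) - (S1 + S2)) ^ 2
        + ((y1 + y2) + rx * (t1 + t2)) ^ 2) :=
    cont_inner L α hα (x1 + x2) (y1 + y2) (t1 + t2) (S1 + S2)
  calc (∫ ry in (-T)..T, ∫ rx in (-L)..L,
        Real.sqrt (((x1 + x2) + α ry * (t1 + t2) - (S1 + S2)) ^ 2
          + ((y1 + y2) + rx * (t1 + t2)) ^ 2))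
      ≤ ∫ ry in (-T)..T, ((∫ rx in (-L)..L, f1 ry rx) + (∫ rx in (-L)..L, f2 ry rx)) := by
        apply intervalIntegral.integral_mono hT'
          (Csum.intervalIntegrable _ _) ((C1.add C2).intervalIntegrable _ _)
        intro ry
        exact inner_le ry
    _ = (∫ ry in (-T)..T, ∫ rx in (-L)..L, f1 ry rx)
        + (∫ ry in (-T)..T, ∫ rx in (-L)..L, f2 ry rx) :=
        intervalIntegral.integral_add (C1.intervalIntegrable _ _) (C2.intervalIntegrable _ _)

lemma flatD_eq (L T W x y t Sr Sl : ℝ) :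
    flatD L T W x y t Sr Sl =
      trackG L T (fun r => W - r) x y t Sr + trackG L T (fun r => -(W + r)) x y t Sl := by
  unfold flatD trackG
  congr 1
  apply intervalIntegral.integral_congr
  intro ly _
  apply intervalIntegral.integral_congr
  intro lx _
  ring_nf

/-- the flat-ground power dissipation function is a seminorm on ℝ⁵. -/
theorem flatD_is_seminorm (L T W : ℝ) (hL : 0 < L) (hT : 0 < T) (hW : 0 < W) :
    (∀ v : ℝ × ℝ × ℝ × ℝ × ℝ, 0 ≤ flatD5 L T W v) ∧
    (∀ (c : ℝ) (v : ℝ × ℝ × ℝ × ℝ × ℝ), flatD5 L T W (c • v) = |c| * flatD5 L T W v) ∧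
    (∀ v w : ℝ × ℝ × ℝ × ℝ × ℝ, flatD5 L T W (v + w) ≤ flatD5 L T W v + flatD5 L T W w) := by
  have hc1 : Continuous fun r : ℝ => W - r := by fun_prop
  have hc2 : Continuous fun r : ℝ => -(W + r) := by fun_prop
  refine ⟨?_, ?_, ?_⟩
  · rintro ⟨x, y, t, Sr, Sl⟩
    simp only [flatD5, flatD_eq]
    have := trackG_nonneg L T (fun r => W - r) x y t Sr hL.le hT.le
    have := trackG_nonneg L T (fun r => -(W + r)) x y t Sl hL.le hT.le
    linarith
  · rintro c ⟨x, y, t, Sr, Sl⟩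
    simp only [flatD5, Prod.smul_def, smul_eq_mul, flatD_eq,
      trackG_smul]
    ring
  · rintro ⟨x1, y1, t1, Sr1, Sl1⟩ ⟨x2, y2, t2, Sr2, Sl2⟩
    simp only [flatD5, Prod.mk_add_mk, flatD_eq]
    have h1 := trackG_add_le L T hL.le hT.le (fun r => W - r) hc1 x1 y1 t1 Sr1 x2 y2 t2 Sr2
    have h2 := trackG_add_le L T hL.le hT.le (fun r => -(W + r)) hc2 x1 y1 t1 Sl1 x2 y2 t2 Sl2
    linarith
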